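/- If V : ℕ × ℕ → ℝ is coordinatewise nondecreasing and submodular, then for every (a,b) ∈ ℕ × ℕ with a ≥ b the action difference is nonincreasing in the second coordinate: Δ_V(a,b+1) ≤ Δ_V(a,b). -/

import Mathlib

noncomputable def Qsense (γ lams cs : ℝ) (V : ℕ × ℕ → ℝ) (p : ℕ × ℕ) : ℝ :=
  (p.1 : ℝ) + cs + γ * (lams * V (p.1 + 1, 1) + (1 - lams) * V (p.1 + 1, p.2 + 1))

noncomputable def Qcomm (γ lamc cc : ℝ) (V : ℕ × ℕ → ℝ) (p : ℕ × ℕ) : ℝ :=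
  (p.1 : ℝ) + cc + γ * (lamc * V (p.2 + 1, p.2 + 1) + (1 - lamc) * V (p.1 + 1, p.2 + 1))

noncomputable def Delta (γ lams lamc cs cc : ℝ) (V : ℕ × ℕ → ℝ) (p : ℕ × ℕ) : ℝ :=
  Qsense γ lams cs V p - Qcomm γ lamc cc V p

noncomputable def Tbell (γ lams lamc cs cc : ℝ) (V : ℕ × ℕ → ℝ) : ℕ × ℕ → ℝ :=
  fun p => min (Qsense γ lams cs V p) (Qcomm γ lamc cc V p)

/-- `V` is nondecreasing in each argument separately. -/
def CoordNondecr (V : ℕ × ℕ → ℝ) : Prop :=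
  (∀ a a' b : ℕ, a ≤ a' → V (a, b) ≤ V (a', b)) ∧
  (∀ a b b' : ℕ, b ≤ b' → V (a, b) ≤ V (a, b'))

/-- Submodularity on the lattice `ℕ × ℕ` (componentwise max/min). -/
def Submodular (W : ℕ × ℕ → ℝ) : Prop :=
  ∀ x y : ℕ × ℕ, W (x ⊔ y) + W (x ⊓ y) ≤ W x + W y

/-- On the reachable region `a ≥ b`, the action difference is nonincreasing in the
base-station age. -/
theorem delta_nonincreasing_in_bs_age
    (γ lams lamc cs cc : ℝ)
    (hγ0 : 0 < γ) (hγ1 : γ < 1) (hs0 : 0 ≤ lams) (hsc : lams ≤ lamc) (hc1 : lamc ≤ 1)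
    (hcs : 0 ≤ cs) (hcc : 0 ≤ cc)
    (V : ℕ × ℕ → ℝ) (hmono : CoordNondecr V) (hsub : Submodular V) :
    ∀ a b : ℕ, b ≤ a →
      Delta γ lams lamc cs cc V (a, b + 1) ≤ Delta γ lams lamc cs cc V (a, b) := by
  intro a b hba
  obtain ⟨hm1, hm2⟩ := hmono
  have hc0 : 0 ≤ lamc := hs0.trans hsc
  have hsup : ((a + 1, b + 1) : ℕ × ℕ) ⊔ (b + 1, b + 2) = (a + 1, b + 2) := by
    simp [Prod.ext_iff]; omega
  have hinf : ((a + 1, b + 1) : ℕ × ℕ) ⊓ (b + 1, b + 2) = (b + 1, b + 1) := by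
    simp [Prod.ext_iff]; omega
  have hD1 : V (a + 1, b + 2) + V (b + 1, b + 1) ≤ V (a + 1, b + 1) + V (b + 1, b + 2) := by
    have := hsub (a + 1, b + 1) (b + 1, b + 2)
    rwa [hsup, hinf] at this
  have hM1 : V (b + 1, b + 2) ≤ V (b + 2, b + 2) := hm1 _ _ _ (by omega)
  have hM2 : V (a + 1, b + 1) ≤ V (a + 1, b + 2) := hm2 _ _ _ (by omega)
  have hD2 : V (a + 1, b + 2) - V (a + 1, b + 1) ≤ V (b + 2, b + 2) - V (b + 1, b + 1) := by
    linarith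
  simp only [Delta, Qsense, Qcomm]
  push_cast
  nlinarith [mul_nonneg (mul_nonneg hγ0.le hc0) (sub_nonneg.mpr hD2),
    mul_nonneg (mul_nonneg hγ0.le hs0) (sub_nonneg.mpr hM2),
    mul_nonneg (mul_nonneg hγ0.le hc0) (sub_nonneg.mpr hM2)]
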